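/- For N ≥ 2, the number α_c = (N+1−√((N−1)(N+3)))/2 lies in the interval (1/(2N−1), 1/N) and satisfies 1 = N·α_c + Σ_{j=2}^∞ (N−1)·α_c^j, i.e., the sequence N,(N−1),(N−1),(N−1),… is an α_c-expansion of 1 with digit set {0,…,2N−2}. -/

import Mathlib

/-- α_c = (N+1−√((N−1)(N+3)))/2 lies in (1/(2N−1), 1/N) and
satisfies 1 = N·α_c + Σ_{j≥2} (N−1)·α_c^j. -/
theorem stmt17 (N : ℕ) (hN : 2 ≤ N) :
    (1 / (2 * (N : ℝ) - 1)
        < ((N : ℝ) + 1 - Real.sqrt (((N : ℝ) - 1) * ((N : ℝ) + 3))) / 2) ∧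
    (((N : ℝ) + 1 - Real.sqrt (((N : ℝ) - 1) * ((N : ℝ) + 3))) / 2 < 1 / (N : ℝ)) ∧
    (1 = (N : ℝ) * (((N : ℝ) + 1 - Real.sqrt (((N : ℝ) - 1) * ((N : ℝ) + 3))) / 2)
        + ∑' j : ℕ, ((N : ℝ) - 1)
            * ((((N : ℝ) + 1 - Real.sqrt (((N : ℝ) - 1) * ((N : ℝ) + 3))) / 2) ^ (j + 2))) := by
  have hN2 : (2 : ℝ) ≤ (N : ℝ) := by exact_mod_cast hN
  set s : ℝ := Real.sqrt (((N : ℝ) - 1) * ((N : ℝ) + 3)) with hs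
  have hs0 : 0 ≤ s := Real.sqrt_nonneg _
  have hssq : s ^ 2 = ((N : ℝ) - 1) * ((N : ℝ) + 3) := by
    rw [hs, Real.sq_sqrt]; nlinarith
  -- (2N-1)s < 2N^2+N-3
  have hpos1 : 0 < (2 * (N : ℝ) - 1) * s + (2 * (N : ℝ) ^ 2 + (N : ℝ) - 3) := by
    nlinarith
  have hslt : (2 * (N : ℝ) - 1) * s < 2 * (N : ℝ) ^ 2 + (N : ℝ) - 3 := by
    nlinarith [hssq, hpos1]
  -- N^2+N-2 < N s
  have hpos2 : 0 ≤ (N : ℝ) * s + ((N : ℝ) ^ 2 + (N : ℝ) - 2) := by nlinarith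
  have hsgt : (N : ℝ) ^ 2 + (N : ℝ) - 2 < (N : ℝ) * s := by
    nlinarith [hssq, hpos2]
  have h2N1 : 0 < 2 * (N : ℝ) - 1 := by linarith
  have hNpos : 0 < (N : ℝ) := by linarith
  have hlow : 1 / (2 * (N : ℝ) - 1) < ((N : ℝ) + 1 - s) / 2 := by
    rw [div_lt_div_iff₀ h2N1 (by norm_num : (0:ℝ) < 2)]
    nlinarith [hslt]
  have hhigh : ((N : ℝ) + 1 - s) / 2 < 1 / (N : ℝ) := by
    rw [div_lt_div_iff₀ (by norm_num : (0:ℝ) < 2) hNpos]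
    nlinarith [hsgt]
  refine ⟨hlow, hhigh, ?_⟩
  set a : ℝ := ((N : ℝ) + 1 - s) / 2 with ha
  have ha0 : 0 < a := lt_trans (by positivity) hlow
  have ha1 : a < 1 := lt_of_lt_of_le hhigh (by
    rw [div_le_one hNpos]; linarith)
  have hkey : a ^ 2 = ((N : ℝ) + 1) * a - 1 := by
    rw [ha]; linear_combination hssq / 4
  have htsum : ∑' j : ℕ, ((N : ℝ) - 1) * a ^ (j + 2)
      = (((N : ℝ) - 1) * a ^ 2) * (1 - a)⁻¹ := by
    calc ∑' j : ℕ, ((N : ℝ) - 1) * a ^ (j + 2)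
        = ∑' j : ℕ, (((N : ℝ) - 1) * a ^ 2) * a ^ j := by
          congr 1; funext j; ring
      _ = (((N : ℝ) - 1) * a ^ 2) * ∑' j : ℕ, a ^ j := tsum_mul_left
      _ = (((N : ℝ) - 1) * a ^ 2) * (1 - a)⁻¹ := by
          rw [tsum_geometric_of_lt_one ha0.le ha1]
  rw [htsum]
  have hne : (1 : ℝ) - a ≠ 0 := by linarith
  field_simp
  linear_combination (-1 : ℝ) * hkey + hssq / 2
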